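/- Let 1 ≤ p ≤ 2 and 1 ≤ K ≤ N, and let f_1,…,f_K be vectors in ℂ^N. Define P_p(f_1,…,f_K) = (∑_{1≤j_1<⋯<j_K≤N} |perm[(f_{i,j_m})]|^p)^{1/p}. Then P_p(f_1,…,f_K) ≤ C(N,K)^{1/p} · (K!/N^{K/2}) · ∏_{i=1}^K |f_i|, where |f_i| is the Euclidean norm. -/

import Mathlib

open scoped BigOperators

/-- The permanent of a `K × K` complex matrix. -/
noncomputable def perm {K : ℕ} (F : Matrix (Fin K) (Fin K) ℂ) : ℂ :=
  ∑ σ : Equiv.Perm (Fin K), ∏ j, F (σ j) j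

/-- Euclidean norm of a vector in `ℂ^N`. -/
noncomputable def vecEnorm {N : ℕ} (f : Fin N → ℂ) : ℝ :=
  Real.sqrt (∑ i, ‖f i‖ ^ 2)

/-- For `s` a `K`-element subset of column indices, the `K × K` submatrix of the
matrix with rows `f 1, …, f K` whose columns are given by the elements of `s` in
increasing order. -/
noncomputable def subMat {N K : ℕ} (f : Fin K → Fin N → ℂ)
    (s : {s : Finset (Fin N) // s ∈ Finset.univ.powersetCard K}) :
    Matrix (Fin K) (Fin K) ℂ :=
  fun i m => f i (s.1.orderEmbOfFin (Finset.mem_powersetCard_univ.mp s.2) m)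

/-- `P(f₁,…,f_K)² = ∑_{j₁<⋯<j_K} |perm (f_{i,j_m})|²`. -/
noncomputable def Ppow {N K : ℕ} (p : ℝ) (f : Fin K → Fin N → ℂ) : ℝ :=
  ∑ s ∈ (Finset.univ.powersetCard K : Finset (Finset (Fin N))).attach,
    ‖perm (subMat f s)‖ ^ p

/-- The "permanent" of the submatrix with rows `f` and column set `S`, as a sum
over injections. -/
noncomputable def Qf {N k : ℕ} (f : Fin k → Fin N → ℂ) (S : Finset (Fin N)) : ℂ :=
  ∑ e ∈ Finset.univ.filter (fun e : Fin k → Fin N => Function.Injective e ∧ ∀ i, e i ∈ S),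
    ∏ i, f i (e i)

lemma Qf_zero {N : ℕ} (f : Fin 0 → Fin N → ℂ) (S : Finset (Fin N)) : Qf f S = 1 := by
  rw [Qf]
  rw [Finset.filter_true_of_mem (fun e _ => ⟨fun a b h => a.elim0, fun i => i.elim0⟩)]
  rw [Finset.sum_congr rfl (fun e _ => Finset.prod_of_isEmpty _)]
  simp [Finset.card_univ]

lemma Qf_succ {N m : ℕ} (f : Fin (m+1) → Fin N → ℂ) (S : Finset (Fin N)) :
    Qf f S = ∑ j ∈ S, f (Fin.last m) j * Qf (fun i => f i.castSucc) (S.erase j) := by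
  have hrw : ∀ j ∈ S, f (Fin.last m) j * Qf (fun i => f i.castSucc) (S.erase j)
      = ∑ e ∈ Finset.univ.filter (fun e : Fin m → Fin N =>
          Function.Injective e ∧ ∀ i, e i ∈ S.erase j),
          f (Fin.last m) j * ∏ i, f i.castSucc (e i) := by
    intro j _
    rw [Qf, Finset.mul_sum]
  rw [Finset.sum_congr rfl hrw,
    ← Finset.sum_sigma S (fun j => Finset.univ.filter (fun e : Fin m → Fin N =>
        Function.Injective e ∧ ∀ i, e i ∈ S.erase j))
      (fun x => f (Fin.last m) x.1 * ∏ i, f i.castSucc (x.2 i))]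
  rw [Qf]
  apply Finset.sum_bij (fun e _ => (⟨e (Fin.last m), fun i => e i.castSucc⟩ :
    Σ _j : Fin N, Fin m → Fin N))
  · -- membership
    rintro e he
    rw [Finset.mem_filter] at he
    obtain ⟨-, heinj, hemem⟩ := he
    refine Finset.mem_sigma.mpr ⟨hemem _, ?_⟩
    rw [Finset.mem_filter]
    refine ⟨Finset.mem_univ _, fun a b hab => ?_, fun i => ?_⟩
    · exact Fin.castSucc_injective m (heinj hab)
    · exact Finset.mem_erase.mpr ⟨fun h => (Fin.castSucc_lt_last i).ne (heinj h), hemem _⟩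
  · -- injectivity
    rintro e1 h1 e2 h2 heq
    rw [Sigma.ext_iff] at heq
    obtain ⟨hlast, hcast⟩ := heq
    have hcast' : (fun i : Fin m => e1 i.castSucc) = fun i => e2 i.castSucc := eq_of_heq hcast
    funext i
    refine Fin.lastCases ?_ ?_ i
    · exact hlast
    · intro j; exact congrFun hcast' j
  · -- surjectivity
    rintro ⟨j, e'⟩ hb
    rw [Finset.mem_sigma] at hb
    obtain ⟨hjS, he'⟩ := hb
    rw [Finset.mem_filter] at he'
    obtain ⟨-, he'inj, he'mem⟩ := he'
    refine ⟨Fin.snoc e' j, ?_, ?_⟩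
    · rw [Finset.mem_filter]
      refine ⟨Finset.mem_univ _, ?_, ?_⟩
      · intro a b hab
        rcases Fin.eq_castSucc_or_eq_last a with ⟨a', rfl⟩ | rfl <;>
          rcases Fin.eq_castSucc_or_eq_last b with ⟨b', rfl⟩ | rfl
        · rw [Fin.snoc_castSucc, Fin.snoc_castSucc] at hab
          exact congrArg Fin.castSucc (he'inj hab)
        · rw [Fin.snoc_last, Fin.snoc_castSucc] at hab
          exact absurd hab (Finset.mem_erase.mp (he'mem a')).1
        · rw [Fin.snoc_last, Fin.snoc_castSucc] at hab
          exact absurd hab.symm (Finset.mem_erase.mp (he'mem b')).1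
        · rfl
      · intro i
        refine Fin.lastCases ?_ ?_ i
        · rw [Fin.snoc_last]; exact hjS
        · intro i'
          rw [Fin.snoc_castSucc]
          exact Finset.mem_of_mem_erase (he'mem i')
    · rw [Sigma.ext_iff]
      constructor
      · simp
      · refine heq_of_eq (funext fun i => ?_)
        simp
  · -- values
    intro e he
    rw [Fin.prod_univ_castSucc]
    ring

lemma perm_subMat_eq {N K : ℕ} (f : Fin K → Fin N → ℂ)
    (s : {s : Finset (Fin N) // s ∈ Finset.univ.powersetCard K}) :
    perm (subMat f s) = Qf f s.1 := by
  have h : s.1.card = K := Finset.mem_powersetCard_univ.mp s.2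
  set emb := s.1.orderEmbOfFin h with hemb
  have step1 : perm (subMat f s) = ∑ σ : Equiv.Perm (Fin K), ∏ i, f i (emb (σ.symm i)) := by
    rw [perm]
    apply Finset.sum_congr rfl
    intro σ _
    rw [← Equiv.prod_comp σ (fun i => f i (emb (σ.symm i)))]
    apply Finset.prod_congr rfl
    intro j _
    rw [Equiv.symm_apply_apply]
    rfl
  have step2 : ∑ σ : Equiv.Perm (Fin K), ∏ i, f i (emb (σ.symm i))
      = ∑ σ : Equiv.Perm (Fin K), ∏ i, f i (emb (σ i)) := by
    exact Fintype.sum_equiv (Equiv.inv (Equiv.Perm (Fin K))) _ _ (fun σ => rfl)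
  rw [step1, step2, Qf]
  apply Finset.sum_bij (fun (σ : Equiv.Perm (Fin K)) _ => (fun x => emb (σ x)))
  · intro σ _
    rw [Finset.mem_filter]
    exact ⟨Finset.mem_univ _, fun a b hab => σ.injective (emb.injective hab),
      fun i => Finset.orderEmbOfFin_mem s.1 h (σ i)⟩
  · intro σ1 _ σ2 _ heq
    apply Equiv.ext
    intro x
    exact emb.injective (congrFun heq x)
  · intro e he
    rw [Finset.mem_filter] at he
    obtain ⟨-, heinj, hemem⟩ := he
    have hbij : Function.Bijective (fun x => (s.1.orderIsoOfFin h).symm ⟨e x, hemem x⟩) := by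
      rw [Fintype.bijective_iff_injective_and_card]
      refine ⟨fun a b hab => ?_, rfl⟩
      have := congrArg (fun z => ((s.1.orderIsoOfFin h) z : Fin N)) hab
      simp only [OrderIso.apply_symm_apply] at this
      exact heinj this
    refine ⟨Equiv.ofBijective _ hbij, Finset.mem_univ _, ?_⟩
    funext x
    show emb ((s.1.orderIsoOfFin h).symm ⟨e x, hemem x⟩) = e x
    rw [← Finset.coe_orderIsoOfFin_apply, OrderIso.apply_symm_apply]
  · intro σ _
    rfl

set_option maxHeartbeats 1000000 in
lemma scalar_key (n m : ℕ) (hn : 1 ≤ n) (hk : m + 2 ≤ n + 1)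
    (s2 x A B b2 : ℝ) (hs2 : 0 ≤ s2) (hx : 0 ≤ x) (hA : 0 ≤ A) (hB : 0 ≤ B) (hb2 : 0 ≤ b2)
    (hcross : b2 ≤ (m+1)*((n:ℝ)-(m+1)+1)/n * s2 * B) :
    (m+2)*((n:ℝ)-(m+2)+1)/n * s2 * A + x*A + 2*(Real.sqrt (x*A) * Real.sqrt b2) + b2
      ≤ (m+2)*(((n:ℝ)+1)-(m+2)+1)/((n:ℝ)+1) * (s2+x) * (A+B) := by
  have hν1 : (1:ℝ) ≤ (n:ℝ) := by exact_mod_cast hn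
  have hν0 : (0:ℝ) < (n:ℝ) := by linarith
  have hνne : (n:ℝ) ≠ 0 := ne_of_gt hν0
  have hν1ne : (n:ℝ) + 1 ≠ 0 := by positivity
  have hrν : (m:ℝ) + 1 ≤ (n:ℝ) := by exact_mod_cast Nat.lt_of_succ_lt_succ hk
  have hr0 : (0:ℝ) ≤ (m:ℝ) := Nat.cast_nonneg m
  set r : ℝ := (m:ℝ)
  set ν : ℝ := (n:ℝ)
  have hd1 : (0:ℝ) ≤ ν - 1 - r := by linarith
  have hd2 : (0:ℝ) ≤ ν - r := by linarith
  have hd3 : (0:ℝ) ≤ r + 1 := by linarith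
  have hd4 : (0:ℝ) ≤ r + 2 := by linarith
  set c1 : ℝ := (r+2)*(ν-(r+2)+1)/ν with hc1
  set c2 : ℝ := (r+1)*(ν-(r+1)+1)/ν with hc2
  set t : ℝ := (r+2)*((ν+1)-(r+2)+1)/(ν+1) with ht
  have hc2nonneg : 0 ≤ c2 := by
    rw [hc2]; apply div_nonneg _ (le_of_lt hν0); nlinarith
  have htnn : 0 ≤ t := by rw [ht]; apply div_nonneg _ (by linarith); nlinarith
  set P : ℝ := (t - c1)*s2 + (t-1)*x with hP
  set R : ℝ := (t - c2)*s2 + t*x with hR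
  have hc : (0:ℝ) < ν*(ν+1) := by positivity
  have e1 : P*(ν*(ν+1)) = ((r+2)*(r+1))*s2 + ((r+1)*(ν-1-r)*ν)*x := by
    rw [hP, ht, hc1]; field_simp; ring
  have e2 : R*(ν*(ν+1)) = ((ν-r)*(ν-1-r))*s2 + ((r+2)*(ν-r)*ν)*x := by
    rw [hR, ht, hc2]; field_simp; ring
  have e3 : c2*ν = (r+1)*(ν-r) := by
    rw [hc2, div_mul_cancel₀ _ hνne]; ring
  have hPnn : 0 ≤ P := by
    have h0 : 0 ≤ P*(ν*(ν+1)) := by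
      rw [e1]
      have h1 := mul_nonneg (mul_nonneg hd4 hd3) hs2
      have h2 := mul_nonneg (mul_nonneg (mul_nonneg hd3 hd1) (le_of_lt hν0)) hx
      linarith
    exact (mul_nonneg_iff_of_pos_right hc).mp h0
  have hRnn : 0 ≤ R := by
    have h0 : 0 ≤ R*(ν*(ν+1)) := by
      rw [e2]
      have h1 := mul_nonneg (mul_nonneg hd2 hd1) hs2
      have h2 := mul_nonneg (mul_nonneg (mul_nonneg hd4 hd2) (le_of_lt hν0)) hx
      linarith
    exact (mul_nonneg_iff_of_pos_right hc).mp h0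
  have hkey : x * (c2 * s2) ≤ P * R := by
    have h0 : (x * (c2*s2)) * ((ν*(ν+1))^2) ≤ (P*R) * ((ν*(ν+1))^2) := by
      have lhs : (x * (c2*s2))*((ν*(ν+1))^2) = ((r+1)*(ν-r))*s2*x*(ν*(ν+1)^2) := by
        have h : (x * (c2*s2))*((ν*(ν+1))^2) = (c2*ν)*s2*x*(ν*(ν+1)^2) := by ring
        rw [h, e3]
      have rhs : (P*R)*((ν*(ν+1))^2) = (P*(ν*(ν+1)))*(R*(ν*(ν+1))) := by ring
      rw [lhs, rhs, e1, e2]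
      nlinarith [sq_nonneg (s2 - ν*x),
        mul_nonneg (mul_nonneg (mul_nonneg hd4 hd3) hd2) hd1,
        mul_nonneg hs2 hx, sq_nonneg ν, mul_pos hν0 (by linarith : (0:ℝ) < ν+1)]
    have hpos : (0:ℝ) < (ν*(ν+1))^2 := by positivity
    exact le_of_mul_le_mul_right h0 hpos
  have hb2' : b2 ≤ c2 * s2 * B := hcross
  have hsb : Real.sqrt b2 ≤ Real.sqrt (c2*s2*B) := Real.sqrt_le_sqrt hb2'
  have step1 : c1 * s2 * A + x*A + 2*(Real.sqrt (x*A) * Real.sqrt b2) + b2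
      ≤ c1 * s2 * A + x*A + 2*(Real.sqrt (x*A) * Real.sqrt (c2*s2*B)) + c2*s2*B := by
    have h2 := Real.sqrt_nonneg (x*A)
    nlinarith [hsb, hb2']
  refine le_trans step1 ?_
  have hamgm : 2*(Real.sqrt (x*A) * Real.sqrt (c2*s2*B)) ≤ P*A + R*B := by
    have f1 : Real.sqrt (x*A) * Real.sqrt (c2*s2*B) = Real.sqrt ((x*(c2*s2))*(A*B)) := by
      rw [← Real.sqrt_mul (by positivity)]
      congr 1; ring
    rw [f1]
    have f2 : Real.sqrt ((x*(c2*s2))*(A*B)) ≤ Real.sqrt ((P*R)*(A*B)) :=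
      Real.sqrt_le_sqrt (mul_le_mul_of_nonneg_right hkey (by positivity))
    have f3 : Real.sqrt ((P*R)*(A*B)) = Real.sqrt (P*A) * Real.sqrt (R*B) := by
      rw [← Real.sqrt_mul (by positivity)]
      congr 1; ring
    have f4 : 2*(Real.sqrt (P*A) * Real.sqrt (R*B)) ≤ P*A + R*B := by
      nlinarith [sq_nonneg (Real.sqrt (P*A) - Real.sqrt (R*B)),
        Real.sq_sqrt (mul_nonneg hPnn hA), Real.sq_sqrt (mul_nonneg hRnn hB),
        Real.sqrt_nonneg (P*A), Real.sqrt_nonneg (R*B)]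
    nlinarith [f2, f3, f4]
  have hfinal : c1 * s2 * A + x*A + (P*A + R*B) + c2*s2*B = t*(s2+x)*(A+B) := by
    rw [hP, hR]; ring
  linarith

lemma lemA {α : Type} [DecidableEq α] :
    ∀ (n : ℕ) (U : Finset α), U.card = n → ∀ (k : ℕ), 1 ≤ k → k ≤ n →
    ∀ (f : α → ℂ) (Q : Finset α → ℂ),
    ∑ J ∈ U.powersetCard k, ‖∑ j ∈ J, f j * Q (J.erase j)‖ ^ 2 ≤
      ((k : ℝ) * ((n:ℝ) - k + 1) / n) * (∑ j ∈ U, ‖f j‖ ^ 2) *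
        ∑ S ∈ U.powersetCard (k - 1), ‖Q S‖ ^ 2 := by
  intro n
  induction n with
  | zero => intro U hU k hk1 hk2; omega
  | succ n ih =>
    intro U hU k hk1 hkn f Q
    rcases Nat.lt_or_ge k 2 with hk2 | hk2
    · -- k = 1
      have hk : k = 1 := by omega
      subst hk
      rw [Finset.powersetCard_one, Finset.sum_map]
      simp only [Function.Embedding.coeFn_mk]
      have hterm : ∀ j ∈ U, ‖∑ i ∈ ({j} : Finset α), f i * Q (({j} : Finset α).erase i)‖ ^ 2
          = ‖f j‖ ^ 2 * ‖Q ∅‖ ^ 2 := by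
        intro j _
        rw [Finset.sum_singleton, Finset.erase_singleton, norm_mul, mul_pow]
      rw [Finset.sum_congr rfl hterm, ← Finset.sum_mul]
      have h0 : (1:ℕ) - 1 = 0 := rfl
      rw [h0, Finset.powersetCard_zero, Finset.sum_singleton]
      have hconst : ((1:ℕ) : ℝ) * (((n+1:ℕ):ℝ) - ((1:ℕ):ℝ) + 1) / ((n+1:ℕ):ℝ) = 1 := by
        have : ((n+1:ℕ):ℝ) ≠ 0 := by positivity
        field_simp
        push_cast; ring
      rw [hconst, one_mul]
    · -- k ≥ 2
      obtain ⟨m, rfl⟩ : ∃ m, k = m + 2 := ⟨k - 2, by omega⟩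
      have hn1 : 1 ≤ n := by omega
      have hUne : U.Nonempty := by rw [← Finset.card_pos, hU]; omega
      obtain ⟨a, ha⟩ := hUne
      set U' := U.erase a with hU'def
      have haU' : a ∉ U' := Finset.notMem_erase a U
      have hU' : U'.card = n := by rw [hU'def, Finset.card_erase_of_mem ha, hU]; omega
      have hins : U = insert a U' := (Finset.insert_erase ha).symm
      -- subset membership helpers
      have hsubU' : ∀ {kk : ℕ} {J : Finset α}, J ∈ U'.powersetCard kk → a ∉ J := by
        intro kk J hJ haJ
        exact haU' ((Finset.mem_powersetCard.mp hJ).1 haJ)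
      have hinj : ∀ (kk : ℕ), ∀ J1 ∈ U'.powersetCard kk, ∀ J2 ∈ U'.powersetCard kk,
          insert a J1 = insert a J2 → J1 = J2 := by
        intro kk J1 h1 J2 h2 heq
        have e1 : (insert a J1).erase a = (insert a J2).erase a := by rw [heq]
        rwa [Finset.erase_insert (hsubU' h1), Finset.erase_insert (hsubU' h2)] at e1
      have hdisj : ∀ (kk : ℕ), Disjoint (U'.powersetCard (kk+1))
          ((U'.powersetCard kk).image (insert a)) := by
        intro kk
        rw [Finset.disjoint_left]
        rintro J hJ hJ'
        obtain ⟨J', hJ', rfl⟩ := Finset.mem_image.mp hJ'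
        exact hsubU' hJ (Finset.mem_insert_self a J')
      -- abbreviations
      set A : ℝ := ∑ S ∈ U'.powersetCard (m+1), ‖Q S‖ ^ 2 with hA
      set B : ℝ := ∑ S ∈ U'.powersetCard m, ‖Q (insert a S)‖ ^ 2 with hB
      set s2 : ℝ := ∑ j ∈ U', ‖f j‖ ^ 2 with hs2
      set x : ℝ := ‖f a‖ ^ 2 with hx
      have hAnn : 0 ≤ A := Finset.sum_nonneg (fun _ _ => by positivity)
      have hBnn : 0 ≤ B := Finset.sum_nonneg (fun _ _ => by positivity)
      have hs2nn : 0 ≤ s2 := Finset.sum_nonneg (fun _ _ => by positivity)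
      have hxnn : 0 ≤ x := by positivity
      -- split the LHS
      rw [hins, Finset.powersetCard_succ_insert haU' (m+1), Finset.sum_union (hdisj (m+1)),
        Finset.sum_image (hinj (m+1))]
      -- split the RHS sums
      have hred : m + 2 - 1 = m + 1 := rfl
      rw [hred, Finset.powersetCard_succ_insert haU' m, Finset.sum_union (hdisj m),
        Finset.sum_image (hinj m), Finset.sum_insert haU']
      -- first sum bound
      have hsum1 : ∑ J ∈ U'.powersetCard (m+2), ‖∑ j ∈ J, f j * Q (J.erase j)‖ ^ 2
          ≤ ((m+2:ℕ) : ℝ) * ((n:ℝ) - ((m+2:ℕ):ℝ) + 1) / n * s2 * A := by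
        rcases Nat.lt_or_ge n (m+2) with hc | hc
        · have hemp : U'.powersetCard (m+2) = ∅ := by
            apply Finset.powersetCard_eq_empty.mpr
            omega
          rw [hemp, Finset.sum_empty]
          have hz : (n:ℝ) - ((m+2:ℕ):ℝ) + 1 = 0 := by
            have : m + 2 = n + 1 := by omega
            rw [this]; push_cast; ring
          rw [hz]
          simp
        · have := ih U' hU' (m+2) (by omega) hc f Q
          rw [hred] at this
          exact this
      -- second sum bound
      set T : Finset α → ℝ := fun J' => ‖∑ j ∈ J', f j * Q (insert a (J'.erase j))‖ with hT
      have hterm : ∀ J' ∈ U'.powersetCard (m+1),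
          ‖∑ j ∈ insert a J', f j * Q ((insert a J').erase j)‖ ^ 2
            ≤ (‖f a‖ * ‖Q J'‖ + T J') ^ 2 := by
        intro J' hJ'
        have haJ' : a ∉ J' := hsubU' hJ'
        rw [Finset.sum_insert haJ', Finset.erase_insert haJ']
        have hrw : ∑ j ∈ J', f j * Q ((insert a J').erase j)
            = ∑ j ∈ J', f j * Q (insert a (J'.erase j)) := by
          apply Finset.sum_congr rfl
          intro j hj
          have hne : a ≠ j := fun h => haJ' (h ▸ hj)
          rw [Finset.erase_insert_of_ne hne]
        rw [hrw]
        have h1 : ‖f a * Q J' + ∑ j ∈ J', f j * Q (insert a (J'.erase j))‖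
            ≤ ‖f a‖ * ‖Q J'‖ + T J' := by
          refine le_trans (norm_add_le _ _) ?_
          rw [norm_mul]
        have h2 : (0:ℝ) ≤ ‖f a * Q J' + ∑ j ∈ J', f j * Q (insert a (J'.erase j))‖ :=
          norm_nonneg _
        exact pow_le_pow_left₀ h2 h1 2
      set b2 : ℝ := ∑ J' ∈ U'.powersetCard (m+1), T J' ^ 2 with hb2
      have hb2nn : 0 ≤ b2 := Finset.sum_nonneg (fun _ _ => by positivity)
      have hb2cross : b2 ≤ ((m+1:ℕ):ℝ) * ((n:ℝ) - ((m+1:ℕ):ℝ) + 1) / n * s2 * B := by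
        have := ih U' hU' (m+1) (by omega) (by omega) f (fun S => Q (insert a S))
        have hred1 : m + 1 - 1 = m := rfl
        rw [hred1] at this
        exact this
      have hcross : ∑ J' ∈ U'.powersetCard (m+1), ‖Q J'‖ * T J'
          ≤ Real.sqrt A * Real.sqrt b2 := by
        have hcs := Finset.sum_mul_sq_le_sq_mul_sq (U'.powersetCard (m+1))
          (fun J' => ‖Q J'‖) T
        have hnn : (0:ℝ) ≤ ∑ J' ∈ U'.powersetCard (m+1), ‖Q J'‖ * T J' :=
          Finset.sum_nonneg (fun J' _ => mul_nonneg (norm_nonneg _) (norm_nonneg _))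
        have h1 : (∑ J' ∈ U'.powersetCard (m+1), ‖Q J'‖ * T J')
            = Real.sqrt ((∑ J' ∈ U'.powersetCard (m+1), ‖Q J'‖ * T J')^2) := by
          rw [Real.sqrt_sq hnn]
        rw [h1, ← Real.sqrt_mul hAnn]
        exact Real.sqrt_le_sqrt hcs
      have hsum2 : ∑ J' ∈ U'.powersetCard (m+1),
          ‖∑ j ∈ insert a J', f j * Q ((insert a J').erase j)‖ ^ 2
            ≤ x * A + 2 * (Real.sqrt (x*A) * Real.sqrt b2) + b2 := by
        refine le_trans (Finset.sum_le_sum hterm) ?_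
        have hexp : ∀ J' ∈ U'.powersetCard (m+1),
            (‖f a‖ * ‖Q J'‖ + T J') ^ 2
              = x * ‖Q J'‖^2 + 2 * ‖f a‖ * (‖Q J'‖ * T J')
                + T J' ^ 2 := by
          intro J' _
          rw [hx]; ring
        rw [Finset.sum_congr rfl hexp]
        rw [Finset.sum_add_distrib, Finset.sum_add_distrib, ← Finset.mul_sum, ← Finset.mul_sum]
        have e1 : Real.sqrt (x*A) = ‖f a‖ * Real.sqrt A := by
          rw [Real.sqrt_mul hxnn, hx, Real.sqrt_sq (norm_nonneg _)]
        rw [e1]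
        have := mul_le_mul_of_nonneg_left hcross
          (by positivity : (0:ℝ) ≤ 2 * ‖f a‖)
        nlinarith [this]
      -- put it together
      have hkey := scalar_key n m hn1 hkn s2 x A B b2 hs2nn hxnn hAnn hBnn hb2nn
        (by exact_mod_cast hb2cross)
      have hglue1 : ((m+2:ℕ) : ℝ) * ((n:ℝ) - ((m+2:ℕ):ℝ) + 1) / n = (m+2)*((n:ℝ)-(m+2)+1)/n := by
        push_cast; ring
      have hglue2 : (((m+2:ℕ)) : ℝ) * (((n+1:ℕ):ℝ) - ((m+2:ℕ):ℝ) + 1) / ((n+1:ℕ):ℝ)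
          = (m+2)*(((n:ℝ)+1)-(m+2)+1)/((n:ℝ)+1) := by
        push_cast; ring
      rw [hglue2]
      calc ∑ J ∈ U'.powersetCard (m+2), ‖∑ j ∈ J, f j * Q (J.erase j)‖ ^ 2
            + ∑ J' ∈ U'.powersetCard (m+1),
              ‖∑ j ∈ insert a J', f j * Q ((insert a J').erase j)‖ ^ 2
          ≤ (m+2)*((n:ℝ)-(m+2)+1)/n * s2 * A + (x * A + 2 * (Real.sqrt (x*A) * Real.sqrt b2) + b2) := by
            apply add_le_add _ hsum2
            rw [← hglue1]
            exact hsum1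
        _ ≤ (m+2)*(((n:ℝ)+1)-(m+2)+1)/((n:ℝ)+1) * (s2+x) * (A+B) := by
            have : (m+2)*((n:ℝ)-(m+2)+1)/n * s2 * A + (x * A + 2 * (Real.sqrt (x*A) * Real.sqrt b2) + b2)
                = (m+2)*((n:ℝ)-(m+2)+1)/n * s2 * A + x*A + 2*(Real.sqrt (x*A) * Real.sqrt b2) + b2 := by ring
            rw [this]
            exact hkey
        _ = (m+2)*(((n:ℝ)+1)-(m+2)+1)/((n:ℝ)+1) * (x + s2) * (A+B) := by ring

lemma lemC {N : ℕ} : ∀ (k : ℕ), k ≤ N → ∀ (f : Fin k → Fin N → ℂ),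
    ∑ S ∈ (Finset.univ : Finset (Fin N)).powersetCard k, ‖Qf f S‖ ^ 2 ≤
      (∏ i ∈ Finset.range k, (((i:ℝ)+1) * ((N:ℝ) - i) / N)) *
        ∏ i, (∑ j, ‖f i j‖ ^ 2) := by
  intro k
  induction k with
  | zero =>
    intro _ f
    rw [Finset.powersetCard_zero, Finset.sum_singleton, Qf_zero]
    simp
  | succ m ih =>
    intro hm f
    have hcard : (Finset.univ : Finset (Fin N)).card = N := by
      rw [Finset.card_univ, Fintype.card_fin]
    have hrw : ∀ S ∈ (Finset.univ : Finset (Fin N)).powersetCard (m+1),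
        ‖Qf f S‖ ^ 2 =
        ‖∑ j ∈ S, f (Fin.last m) j * Qf (fun i => f i.castSucc) (S.erase j)‖ ^ 2 := by
      intro S _
      rw [Qf_succ]
    rw [Finset.sum_congr rfl hrw]
    have hA := lemA N (Finset.univ : Finset (Fin N)) hcard (m+1) (by omega) hm
      (f (Fin.last m)) (Qf (fun i => f i.castSucc))
    have hred : m + 1 - 1 = m := rfl
    rw [hred] at hA
    refine le_trans hA ?_
    have hconstnn : (0:ℝ) ≤ ((m+1:ℕ) : ℝ) * ((N:ℝ) - ((m+1:ℕ):ℝ) + 1) / N := by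
      apply div_nonneg _ (Nat.cast_nonneg N)
      apply mul_nonneg (Nat.cast_nonneg _)
      have : ((m+1:ℕ):ℝ) ≤ (N:ℝ) := by exact_mod_cast hm
      linarith
    have hnorm : (0:ℝ) ≤ ∑ j, ‖f (Fin.last m) j‖ ^ 2 :=
      Finset.sum_nonneg (fun _ _ => by positivity)
    have hIH := ih (by omega) (fun i => f i.castSucc)
    have := mul_le_mul_of_nonneg_left hIH (mul_nonneg hconstnn hnorm)
    refine le_trans (le_of_eq (by ring)) (le_trans this (le_of_eq ?_))
    rw [Finset.prod_range_succ, Fin.prod_univ_castSucc]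
    have hcast : ((m+1:ℕ) : ℝ) * ((N:ℝ) - ((m+1:ℕ):ℝ) + 1) / N
        = ((m:ℝ)+1) * ((N:ℝ) - m) / N := by push_cast; ring
    rw [hcast]
    ring

lemma const_eq {N K : ℕ} (hKN : K ≤ N) (hN : 1 ≤ N) :
    (∏ i ∈ Finset.range K, (((i:ℝ)+1) * ((N:ℝ) - i) / N)) =
      (K.factorial : ℝ)^2 * (N.choose K : ℝ) / (N:ℝ)^K := by
  have hN0 : (N:ℝ) ≠ 0 := by positivity
  have h1 : (∏ i ∈ Finset.range K, (((i:ℝ)+1) * ((N:ℝ) - i) / N))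
      = ((∏ i ∈ Finset.range K, ((i:ℝ)+1)) * (∏ i ∈ Finset.range K, ((N:ℝ) - i))) / (N:ℝ)^K := by
    rw [← Finset.prod_mul_distrib]
    rw [Finset.prod_div_distrib]
    simp [Finset.prod_const]
  have h2 : (∏ i ∈ Finset.range K, ((i:ℝ)+1)) = (K.factorial : ℝ) := by
    rw [← Finset.prod_range_add_one_eq_factorial K]
    push_cast; rfl
  have h3 : (∏ i ∈ Finset.range K, ((N:ℝ) - i)) = (N.descFactorial K : ℝ) := by
    rw [Nat.descFactorial_eq_prod_range]
    push_cast
    apply Finset.prod_congr rfl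
    intro i hi
    have hiN : i ≤ N := le_trans (le_of_lt (Finset.mem_range.mp hi)) hKN
    rw [Nat.cast_sub hiN]
  rw [h1, h2, h3, Nat.descFactorial_eq_factorial_mul_choose]
  push_cast
  ring

theorem Pp_functional_bound {N K : ℕ} (p : ℝ) (hp1 : 1 ≤ p) (hp2 : p ≤ 2)
    (hK : 1 ≤ K) (hKN : K ≤ N) (f : Fin K → Fin N → ℂ) :
    Ppow p f ^ (1 / p) ≤
      (N.choose K : ℝ) ^ (1 / p) *
        ((K.factorial : ℝ) / (N : ℝ) ^ ((K : ℝ) / 2)) * ∏ i, vecEnorm (f i) := by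
  have hN : 1 ≤ N := le_trans hK hKN
  have hNpos : (0:ℝ) < (N:ℝ) := by exact_mod_cast hN
  have hp0 : (0:ℝ) < p := lt_of_lt_of_le one_pos hp1
  set T : Finset (Finset (Fin N)) := Finset.univ.powersetCard K with hT
  set y : Finset (Fin N) → ℝ := fun S => ‖Qf f S‖ with hy
  have hynn : ∀ S, 0 ≤ y S := fun S => norm_nonneg _
  set M : ℝ := (N.choose K : ℝ) with hM
  have hMpos : 0 < M := by
    rw [hM]; exact_mod_cast Nat.choose_pos hKN
  have hcardT : (T.card : ℝ) = M := by
    rw [hT, hM, Finset.card_powersetCard, Finset.card_univ, Fintype.card_fin]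
  -- rewrite Ppow
  have hPp : ∀ q : ℝ, Ppow q f = ∑ S ∈ T, y S ^ q := by
    intro q
    rw [Ppow]
    rw [Finset.sum_congr rfl (fun s _ => by rw [perm_subMat_eq f s])]
    exact Finset.sum_attach T (fun S => ‖Qf f S‖ ^ q)
  -- the L² bound
  set E : ℝ := ∏ i, vecEnorm (f i) with hE
  have hEnn : 0 ≤ E := Finset.prod_nonneg (fun i _ => Real.sqrt_nonneg _)
  have hE2 : E ^ 2 = ∏ i, (∑ j, ‖f i j‖ ^ 2) := by
    rw [hE, ← Finset.prod_pow]
    exact Finset.prod_congr rfl (fun i _ =>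
      Real.sq_sqrt (Finset.sum_nonneg (fun j _ => by positivity)))
  set D : ℝ := (K.factorial : ℝ)^2 * M / (N:ℝ)^K with hD
  have hL2 : ∑ S ∈ T, y S ^ (2:ℕ) ≤ D * E ^ 2 := by
    rw [hE2, hD, hM, ← const_eq hKN hN]
    exact lemC K hKN f
  -- Hölder step
  have hq1 : 1 ≤ 2/p := by
    rw [le_div_iff₀ hp0]; linarith
  have hmean := Real.arith_mean_le_rpow_mean T (fun _ => 1/M) (fun S => y S ^ p)
    (fun _ _ => by positivity) (by
      rw [Finset.sum_const, nsmul_eq_mul, hcardT]; field_simp)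
    (fun S _ => Real.rpow_nonneg (hynn S) p) hq1
  have hrw2 : ∀ S ∈ T, (1/M) * (y S ^ p) ^ (2/p) = (1/M) * y S ^ (2:ℕ) := by
    intro S _
    congr 1
    rw [← Real.rpow_mul (hynn S), ← Real.rpow_natCast (y S) 2]
    congr 1
    push_cast
    field_simp
  rw [Finset.sum_congr rfl hrw2] at hmean
  have hinv : 1/(2/p) = p/2 := one_div_div 2 p
  rw [hinv] at hmean
  simp only [← Finset.mul_sum] at hmean
  -- hmean : (1/M) * ∑ y^p ≤ ((1/M) * ∑ y^2)^(p/2)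
  set Sig2 : ℝ := ∑ S ∈ T, y S ^ (2:ℕ) with hSig2
  have hSig2nn : 0 ≤ Sig2 := Finset.sum_nonneg (fun S _ => by positivity)
  set G : ℝ := (K.factorial : ℝ)^2/(N:ℝ)^K * E^2 with hG
  set H : ℝ := (K.factorial : ℝ)/(N:ℝ)^((K:ℝ)/2) * E with hH
  have hHnn : 0 ≤ H := by
    rw [hH]
    have : (0:ℝ) < (N:ℝ)^((K:ℝ)/2) := Real.rpow_pos_of_pos hNpos _
    positivity
  have hGH : G = H^2 := by
    have haux : ((N:ℝ)^((K:ℝ)/2))^(2:ℕ) = (N:ℝ)^(K:ℕ) := by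
      rw [← Real.rpow_natCast ((N:ℝ)^((K:ℝ)/2)) 2, ← Real.rpow_mul hNpos.le,
        ← Real.rpow_natCast (N:ℝ) K]
      congr 1
      push_cast
      ring
    rw [hG, hH, mul_pow, div_pow, haux]
  have hGnn : 0 ≤ G := by rw [hGH]; positivity
  have hstep : Ppow p f ≤ M * G^(p/2) := by
    have h1 : Ppow p f = M * ((1/M) * ∑ S ∈ T, y S ^ p) := by
      rw [hPp p]
      field_simp
    rw [h1]
    apply mul_le_mul_of_nonneg_left _ hMpos.le
    refine le_trans hmean ?_
    apply Real.rpow_le_rpow (by positivity) _ (by positivity)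
    have h2 : (1/M) * Sig2 ≤ (1/M) * (D * E^2) :=
      mul_le_mul_of_nonneg_left hL2 (by positivity)
    refine le_trans h2 (le_of_eq ?_)
    rw [hD, hG]
    field_simp
  have hPpnn : 0 ≤ Ppow p f := by
    rw [hPp p]
    exact Finset.sum_nonneg (fun S _ => Real.rpow_nonneg (hynn S) p)
  have hfin := Real.rpow_le_rpow hPpnn hstep (by positivity : (0:ℝ) ≤ 1/p)
  refine le_trans hfin (le_of_eq ?_)
  rw [Real.mul_rpow hMpos.le (Real.rpow_nonneg hGnn _)]
  have h3 : (G^(p/2))^(1/p) = H := by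
    rw [← Real.rpow_mul hGnn]
    have h4 : (p/2)*(1/p) = 1/2 := by
      field_simp
    rw [h4, hGH, ← Real.rpow_natCast H 2, ← Real.rpow_mul hHnn]
    rw [show ((2:ℕ):ℝ)*(1/2) = 1 by norm_num, Real.rpow_one]
  rw [h3, hH, hM, mul_assoc]
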